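/- Let ν be a measure on ℝ × ℝ with both marginals equal to Lebesgue measure, and suppose ν is supported on the complete graph of a nondecreasing function w : ℝ → ℝ (i.e., ν vanishes on every quadrant (-∞,v₀) × (w₀,∞) with w₀ > w(v₀) and every quadrant (v₀,∞) × (-∞,w₀) with w₀ < w(v₀)). Then there exists θ ∈ ℝ such that w(v) = v + θ for all v. -/

import Mathlib

open MeasureTheory

theorem monotone_support_uniform_marginals_is_shift
    (ν : Measure (ℝ × ℝ))
    (hmarg₁ : ∀ A : Set ℝ, MeasurableSet A → ν (A ×ˢ Set.univ) = volume A)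
    (hmarg₂ : ∀ B : Set ℝ, MeasurableSet B → ν (Set.univ ×ˢ B) = volume B)
    (w : ℝ → ℝ) (hw : Monotone w)
    (hsupp₁ : ∀ v₀ w₀ : ℝ, w v₀ < w₀ → ν (Set.Iio v₀ ×ˢ Set.Ioi w₀) = 0)
    (hsupp₂ : ∀ v₀ w₀ : ℝ, w₀ < w v₀ → ν (Set.Ioi v₀ ×ˢ Set.Iio w₀) = 0) :
    ∃ θ : ℝ, ∀ v : ℝ, w v = v + θ := by
  -- closed-quadrant null sets
  have hnull₁ : ∀ a : ℝ, ν (Set.Iio a ×ˢ Set.Ioi (w a)) = 0 := by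
    intro a
    have hsub : Set.Iio a ×ˢ Set.Ioi (w a) ⊆
        ⋃ n : ℕ, Set.Iio a ×ˢ Set.Ioi (w a + 1 / (n + 1)) := by
      rintro ⟨x, y⟩ ⟨hx, hy⟩
      obtain ⟨n, hn⟩ := exists_nat_one_div_lt (show (0:ℝ) < y - w a from sub_pos.mpr hy)
      exact Set.mem_iUnion.mpr ⟨n, hx, by simp only [Set.mem_Ioi]; linarith⟩
    refine measure_mono_null hsub (measure_iUnion_null fun n => ?_)
    exact hsupp₁ a _ (lt_add_of_pos_right _ (by positivity))
  have hnull₂ : ∀ a : ℝ, ν (Set.Ioi a ×ˢ Set.Iio (w a)) = 0 := by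
    intro a
    have hsub : Set.Ioi a ×ˢ Set.Iio (w a) ⊆
        ⋃ n : ℕ, Set.Ioi a ×ˢ Set.Iio (w a - 1 / (n + 1)) := by
      rintro ⟨x, y⟩ ⟨hx, hy⟩
      obtain ⟨n, hn⟩ := exists_nat_one_div_lt (show (0:ℝ) < w a - y from sub_pos.mpr hy)
      exact Set.mem_iUnion.mpr ⟨n, hx, by simp only [Set.mem_Iio]; linarith⟩
    refine measure_mono_null hsub (measure_iUnion_null fun n => ?_)
    refine hsupp₂ a _ ?_
    have : (0:ℝ) < 1 / (n + 1) := by positivity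
    linarith
  -- key: for a < b, w b - w a = b - a
  have key : ∀ a b : ℝ, a < b → w b - w a = b - a := by
    intro a b hab
    have hwab : w a ≤ w b := hw hab.le
    -- direction 1 : b - a ≤ w b - w a
    have h1 : ENNReal.ofReal (b - a) ≤ ENNReal.ofReal (w b - w a) := by
      have hsub : Set.Ioo a b ×ˢ (Set.univ : Set ℝ) ⊆
          (Set.Iio b ×ˢ Set.Ioi (w b)) ∪ (Set.Ioi a ×ˢ Set.Iio (w a)) ∪
          ((Set.univ : Set ℝ) ×ˢ Set.Icc (w a) (w b)) := by
        rintro ⟨x, y⟩ ⟨hx, -⟩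
        rcases lt_or_ge (w b) y with hy | hy
        · exact Or.inl (Or.inl ⟨hx.2, hy⟩)
        rcases lt_or_ge y (w a) with hy' | hy'
        · exact Or.inl (Or.inr ⟨hx.1, hy'⟩)
        · exact Or.inr ⟨trivial, hy', hy⟩
      calc ENNReal.ofReal (b - a) = ν (Set.Ioo a b ×ˢ (Set.univ : Set ℝ)) := by
              rw [hmarg₁ _ measurableSet_Ioo, Real.volume_Ioo]
        _ ≤ ν ((Set.Iio b ×ˢ Set.Ioi (w b)) ∪ (Set.Ioi a ×ˢ Set.Iio (w a)) ∪
              ((Set.univ : Set ℝ) ×ˢ Set.Icc (w a) (w b))) := measure_mono hsub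
        _ ≤ ν (Set.Iio b ×ˢ Set.Ioi (w b)) + ν (Set.Ioi a ×ˢ Set.Iio (w a)) +
              ν ((Set.univ : Set ℝ) ×ˢ Set.Icc (w a) (w b)) :=
            le_trans (measure_union_le _ _) (by gcongr; exact measure_union_le _ _)
        _ = ENNReal.ofReal (w b - w a) := by
            rw [hnull₁, hnull₂, hmarg₂ _ measurableSet_Icc, Real.volume_Icc]
            simp
    -- direction 2 : w b - w a ≤ b - a
    have h2 : ENNReal.ofReal (w b - w a) ≤ ENNReal.ofReal (b - a) := by
      have hsub : (Set.univ : Set ℝ) ×ˢ Set.Ioo (w a) (w b) ⊆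
          (Set.Ioi b ×ˢ Set.Iio (w b)) ∪ (Set.Iio a ×ˢ Set.Ioi (w a)) ∪
          (Set.Icc a b ×ˢ (Set.univ : Set ℝ)) := by
        rintro ⟨x, y⟩ ⟨-, hy⟩
        rcases lt_or_ge b x with hx | hx
        · exact Or.inl (Or.inl ⟨hx, hy.2⟩)
        rcases lt_or_ge x a with hx' | hx'
        · exact Or.inl (Or.inr ⟨hx', hy.1⟩)
        · exact Or.inr ⟨⟨hx', hx⟩, trivial⟩
      calc ENNReal.ofReal (w b - w a) = ν ((Set.univ : Set ℝ) ×ˢ Set.Ioo (w a) (w b)) := by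
              rw [hmarg₂ _ measurableSet_Ioo, Real.volume_Ioo]
        _ ≤ ν ((Set.Ioi b ×ˢ Set.Iio (w b)) ∪ (Set.Iio a ×ˢ Set.Ioi (w a)) ∪
              (Set.Icc a b ×ˢ (Set.univ : Set ℝ))) := measure_mono hsub
        _ ≤ ν (Set.Ioi b ×ˢ Set.Iio (w b)) + ν (Set.Iio a ×ˢ Set.Ioi (w a)) +
              ν (Set.Icc a b ×ˢ (Set.univ : Set ℝ)) :=
            le_trans (measure_union_le _ _) (by gcongr; exact measure_union_le _ _)
        _ = ENNReal.ofReal (b - a) := by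
            rw [hnull₁, hnull₂, hmarg₁ _ measurableSet_Icc, Real.volume_Icc]
            simp
    have e1 : b - a ≤ w b - w a :=
      (ENNReal.ofReal_le_ofReal_iff (by linarith)).mp h1
    have e2 : w b - w a ≤ b - a :=
      (ENNReal.ofReal_le_ofReal_iff (by linarith)).mp h2
    linarith
  refine ⟨w 0, fun v => ?_⟩
  rcases lt_trichotomy v 0 with hv | hv | hv
  · have := key v 0 hv; linarith
  · simp [hv]
  · have := key 0 v hv; linarith
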